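/- arXiv:1504.02811 — 2 statements merged into one kernel-verified Lean document; each statement's English description precedes it below -/
import Mathlib

section
/- (Identification of the right-preconditioned GMRES affine space with a Krylov subspace; the key computation behind Lemma 4.1.) For every n×n complex matrix A and every integer m ≥ 1, the ℂ-subspace of ℂ^n spanned by x together with the vectors M_Π† (Π A Π* M_Π†)^j (A x) for 0 ≤ j ≤ m−1 equals the Krylov subspace 𝒦_{m+1}(M_Π† A, x), i.e., the span of the vectors (M_Π† A)^i x for 0 ≤ i ≤ m. -/
open Matrix

lemma aux_mul_vecMulVec {n : ℕ} (N : Matrix (Fin n) (Fin n) ℂ) (a b : Fin n → ℂ) :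
    N * vecMulVec a b = vecMulVec (N *ᵥ a) b := by
  ext i j
  simp [Matrix.mul_apply, vecMulVec_apply, mulVec, dotProduct, Finset.sum_mul, mul_assoc]

lemma aux_vecMulVec_mul {n : ℕ} (N : Matrix (Fin n) (Fin n) ℂ) (a b : Fin n → ℂ) :
    vecMulVec a b * N = vecMulVec a (b ᵥ* N) := by
  ext i j
  simp [Matrix.mul_apply, vecMulVec_apply, vecMul, dotProduct, Finset.mul_sum, mul_assoc]

lemma aux_vecMulVec_mulVec {n : ℕ} (a b v : Fin n → ℂ) :
    vecMulVec a b *ᵥ v = (b ⬝ᵥ v) • a := by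
  ext i
  simp only [mulVec, dotProduct, vecMulVec_apply, Pi.smul_apply, smul_eq_mul]
  rw [Finset.sum_mul]
  exact Finset.sum_congr rfl fun k _ => by ring

lemma aux_vecMul_vecMulVec {n : ℕ} (a b v : Fin n → ℂ) :
    v ᵥ* vecMulVec a b = (v ⬝ᵥ a) • b := by
  ext j
  simp only [vecMul, dotProduct, vecMulVec_apply, Pi.smul_apply, smul_eq_mul]
  rw [Finset.sum_mul]
  exact Finset.sum_congr rfl fun k _ => by ring

lemma aux_conjTranspose_vecMulVec {n : ℕ} (a b : Fin n → ℂ) :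
    (vecMulVec a b)ᴴ = vecMulVec (star b) (star a) := by
  ext i j
  simp [conjTranspose_apply, vecMulVec_apply, mul_comm]

lemma aux_smul_vecMulVec {n : ℕ} (c : ℂ) (a b : Fin n → ℂ) :
    c • vecMulVec a b = vecMulVec a (c • b) := by
  ext i j
  simp [vecMulVec_apply]; ring

lemma aux_vecMulVec_zero_right {n : ℕ} (a : Fin n → ℂ) :
    vecMulVec a (0 : Fin n → ℂ) = 0 := by
  ext i j; simp [vecMulVec_apply]

/-- with `Π = I − (w x*)/(x*w)` and
`M_Π† = (I − (M⁻¹w w*)/(w*M⁻¹w)) M⁻¹`, for every `n×n` complex matrix `A` and every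
`m ≥ 1`, the span of `x` together with the vectors `M_Π† (Π A Π* M_Π†)^j (A x)` for
`0 ≤ j ≤ m-1` equals the Krylov subspace `𝒦_{m+1}(M_Π† A, x)`, i.e. the span of the
vectors `(M_Π† A)^i x` for `0 ≤ i ≤ m`. -/
theorem preconditioned_gmres_space_eq_krylov
    (n : ℕ) (M : Matrix (Fin n) (Fin n) ℂ) (hM : IsUnit M.det)
    (x w : Fin n → ℂ)
    (hxw : star x ⬝ᵥ w ≠ 0)
    (hwMw : star w ⬝ᵥ M⁻¹ *ᵥ w ≠ 0)
    (P : Matrix (Fin n) (Fin n) ℂ)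
    (hP : P = 1 - (star x ⬝ᵥ w)⁻¹ • vecMulVec w (star x))
    (MPd : Matrix (Fin n) (Fin n) ℂ)
    (hMPd : MPd = (1 - (star w ⬝ᵥ M⁻¹ *ᵥ w)⁻¹ • vecMulVec (M⁻¹ *ᵥ w) (star w)) * M⁻¹)
    (A : Matrix (Fin n) (Fin n) ℂ) (m : ℕ) (hm : 1 ≤ m) :
    Submodule.span ℂ
        (insert x (Set.range fun j : Fin m =>
          (MPd * (P * A * Pᴴ * MPd) ^ (j : ℕ)) *ᵥ (A *ᵥ x))) =
      Submodule.span ℂ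
        (Set.range fun i : Fin (m + 1) => ((MPd * A) ^ (i : ℕ)) *ᵥ x) := by
  set u : Fin n → ℂ := M⁻¹ *ᵥ w with hu
  have hMPdw : MPd *ᵥ w = 0 := by
    rw [hMPd, ← Matrix.mulVec_mulVec, ← hu, Matrix.sub_mulVec, Matrix.one_mulVec,
      aux_smul_vecMulVec, aux_vecMulVec_mulVec]
    rw [smul_dotProduct, smul_eq_mul, inv_mul_cancel₀ hwMw, one_smul, sub_self]
  have hwMPd : star w ᵥ* MPd = 0 := by
    rw [hMPd, ← Matrix.vecMul_vecMul, Matrix.vecMul_sub, Matrix.vecMul_one,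
      aux_smul_vecMulVec, aux_vecMul_vecMulVec]
    simp only [smul_smul]
    rw [mul_inv_cancel₀ hwMw, one_smul, sub_self, Matrix.zero_vecMul]
  have hMP : MPd * P = MPd := by
    rw [hP, mul_sub, mul_one, Matrix.mul_smul, aux_mul_vecMulVec, hMPdw]
    have : vecMulVec (0 : Fin n → ℂ) (star x) = 0 := by ext i j; simp [vecMulVec_apply]
    rw [this, smul_zero, sub_zero]
  have hPM : Pᴴ * MPd = MPd := by
    rw [hP, conjTranspose_sub, conjTranspose_one, conjTranspose_smul,
      aux_conjTranspose_vecMulVec, sub_mul, one_mul, Matrix.smul_mul,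
      aux_vecMulVec_mul, hwMPd, aux_vecMulVec_zero_right, smul_zero, sub_zero]
  have key : ∀ j : ℕ, MPd * (P * A * Pᴴ * MPd) ^ j = (MPd * A) ^ j * MPd := by
    intro j
    induction j with
    | zero => simp
    | succ j ih =>
      rw [pow_succ', ← mul_assoc]
      have h1 : MPd * (P * A * Pᴴ * MPd) = MPd * A * MPd := by
        calc MPd * (P * A * Pᴴ * MPd) = (MPd * P) * A * (Pᴴ * MPd) := by
              simp only [mul_assoc]
          _ = MPd * A * MPd := by rw [hMP, hPM]
      rw [h1, mul_assoc (MPd * A) MPd _, ih]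
      simp only [pow_succ', mul_assoc]
  have hvec : ∀ j : ℕ, (MPd * (P * A * Pᴴ * MPd) ^ j) *ᵥ (A *ᵥ x)
      = ((MPd * A) ^ (j + 1)) *ᵥ x := by
    intro j
    rw [key j, Matrix.mulVec_mulVec, pow_succ, mul_assoc]
  congr 1
  ext y
  simp only [Set.mem_insert_iff, Set.mem_range, hvec]
  constructor
  · rintro (rfl | ⟨j, rfl⟩)
    · exact ⟨0, by simp⟩
    · exact ⟨⟨(j : ℕ) + 1, by omega⟩, rfl⟩
  · rintro ⟨i, rfl⟩
    rcases Nat.eq_zero_or_pos (i : ℕ) with h0 | hpos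
    · left; simp [h0]
    · right
      refine ⟨⟨(i : ℕ) - 1, by omega⟩, ?_⟩
      simp only
      rw [Nat.sub_add_cancel hpos]
end

section
/- (Exact solution of the Jacobi–Davidson correction equation.) If Δx ∈ ℂ^n satisfies Π₂ Δx = Δx and Π₁ A Π₂ Δx = −A x, then x + Δx = ((x*Bx)/(x*B A⁻¹ B x)) · A⁻¹ B x; in particular, x + Δx is parallel to A⁻¹ B x. -/
open Matrix

private lemma vmv_mulVec {n : ℕ} (u v w : Fin n → ℂ) :
    vecMulVec u v *ᵥ w = (v ⬝ᵥ w) • u := by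
  ext i
  simp [vecMulVec_apply, mulVec, dotProduct, Finset.mul_sum, mul_comm, mul_left_comm]

private lemma starB_dot {n : ℕ} {B : Matrix (Fin n) (Fin n) ℂ} (hB : B.IsHermitian)
    (x w : Fin n → ℂ) : star (B *ᵥ x) ⬝ᵥ w = star x ⬝ᵥ B *ᵥ w := by
  rw [star_mulVec, hB.eq, dotProduct_mulVec]

/-- exact solution of the Jacobi–Davidson correction equation.  With
`Π₁ = I − (Bx x*)/(x*Bx)` and `Π₂ = Π₁*`, if `Π₂ Δx = Δx` and `Π₁ A Π₂ Δx = −A x`,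
then `x + Δx = ((x*Bx)/(x*B A⁻¹ B x)) A⁻¹ B x`; in particular `x + Δx` is parallel
to `A⁻¹ B x`. -/
theorem jacobi_davidson_correction_solution
    (n : ℕ) (A B : Matrix (Fin n) (Fin n) ℂ)
    (hB : B.IsHermitian) (hA : IsUnit A.det)
    (x : Fin n → ℂ)
    (hxBx : star x ⬝ᵥ B *ᵥ x ≠ 0)
    (hxBABx : star x ⬝ᵥ (B * A⁻¹ * B) *ᵥ x ≠ 0)
    (P1 P2 : Matrix (Fin n) (Fin n) ℂ)
    (hP1 : P1 = 1 - (star x ⬝ᵥ B *ᵥ x)⁻¹ • vecMulVec (B *ᵥ x) (star x))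
    (hP2 : P2 = P1ᴴ)
    (dx : Fin n → ℂ)
    (hdx1 : P2 *ᵥ dx = dx)
    (hdx2 : (P1 * A * P2) *ᵥ dx = -(A *ᵥ x)) :
    x + dx = ((star x ⬝ᵥ B *ᵥ x) / (star x ⬝ᵥ (B * A⁻¹ * B) *ᵥ x)) •
      ((A⁻¹ * B) *ᵥ x) := by
  set α := star x ⬝ᵥ B *ᵥ x with hα
  set δ := star x ⬝ᵥ (B * A⁻¹ * B) *ᵥ x with hδ
  have hx0 : x ≠ 0 := by
    rintro rfl; exact hxBx (by simp [hα])
  -- P1ᴴ computation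
  have hP1H : P1ᴴ = 1 - (star α)⁻¹ • vecMulVec x (star (B *ᵥ x)) := by
    rw [hP1]
    ext i j
    simp [conjTranspose_apply, vecMulVec_apply, mul_comm, one_apply]
    by_cases h : i = j
    · subst h; simp
    · simp [h, Ne.symm h]
  -- from hdx1 : x* B dx = 0
  have hxBdx : star x ⬝ᵥ B *ᵥ dx = 0 := by
    have h := hdx1
    rw [hP2, hP1H, sub_mulVec, one_mulVec, smul_mulVec, vmv_mulVec,
      starB_dot hB] at h
    have h2 : ((star α)⁻¹ * (star x ⬝ᵥ B *ᵥ dx)) • x = 0 := by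
      have := sub_eq_self.mp h
      rwa [smul_smul] at this
    rcases smul_eq_zero.mp h2 with h3 | h3
    · rcases mul_eq_zero.mp h3 with h4 | h4
      · exact absurd (inv_eq_zero.mp h4) (star_ne_zero.mpr hxBx)
      · exact h4
    · exact absurd h3 hx0
  -- from hdx2 : A (x + dx) = c • B x
  set c := α⁻¹ * (star x ⬝ᵥ A *ᵥ dx) with hc
  have hAxdx : A *ᵥ (x + dx) = c • (B *ᵥ x) := by
    have h := hdx2
    rw [Matrix.mul_assoc, ← mulVec_mulVec, ← mulVec_mulVec, hdx1, hP1,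
      sub_mulVec, one_mulVec, smul_mulVec, vmv_mulVec, smul_smul] at h
    rw [mulVec_add]
    have := sub_eq_iff_eq_add.mp h
    rw [this]
    ring_nf
    rfl
  -- apply A⁻¹
  have hxdx : x + dx = c • ((A⁻¹ * B) *ᵥ x) := by
    have := congrArg (fun v => A⁻¹ *ᵥ v) hAxdx
    simp only [mulVec_smul] at this
    rwa [mulVec_mulVec, Matrix.nonsing_inv_mul A hA, one_mulVec,
      mulVec_mulVec] at this
  -- determine c
  have hcδ : c * δ = α := by
    have h1 : star x ⬝ᵥ B *ᵥ (x + dx) = α := by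
      rw [mulVec_add, dotProduct_add, hxBdx, add_zero]
    rw [hxdx] at h1
    rw [← h1, mulVec_smul, dotProduct_smul, smul_eq_mul, hδ]
    rw [Matrix.mul_assoc, ← mulVec_mulVec]
  have hc' : c = α / δ := by
    field_simp
    linear_combination hcδ
  rw [hxdx, hc']
end
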